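/- Let 0 < ε < 1. For any metric space (X, δ), points v, r, and any finite set P ⊆ X lying on a shortest path from r (i.e., for z, w ∈ P with δ(r,z) ≤ δ(r,w), δ(z,w) = δ(r,w) − δ(r,z)), there exists a subset Z ⊆ P of size less than 4·(ε − ε²)^{-1} such that for every w ∈ P there exists z ∈ Z with δ(v, z) + δ(z, w) ≤ (1+ε)·δ(v, w). -/

import Mathlib

theorem portals_phase {X : Type*} [MetricSpace X] [DecidableEq X] (ε : ℝ) (h0 : 0 < ε)
    (v : X) (P : Finset X) (c : X → ℝ)
    (hc : ∀ z ∈ P, ∀ w ∈ P, c z ≤ c w → dist z w = c w - c z)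
    (d L : ℝ) (hd : 0 < d) (hdle : ∀ p ∈ P, d ≤ dist v p)
    (hlow : ∀ p ∈ P, L ≤ dist v p - c p) :
    ∀ n : ℕ, ∀ Q : Finset X, Q.card ≤ n → ∀ z, z ∈ P → (∀ q ∈ Q, q ∈ P ∧ c z ≤ c q) →
    ∃ Z : Finset X, Z ⊆ Q ∧
      (∀ w ∈ Q, ∃ z' ∈ insert z Z, dist v z' + dist z' w ≤ (1 + ε) * dist v w) ∧
      ε * d * Z.card ≤ (dist v z - c z) - L := by
  classical
  intro n
  induction n with
  | zero =>
    intro Q hQ z hz hQP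
    refine ⟨∅, by simp, ?_, by simpa using hlow z hz⟩
    intro w hw
    rw [Finset.card_eq_zero.mp (Nat.le_zero.mp hQ)] at hw
    exact absurd hw (Finset.notMem_empty w)
  | succ n ih =>
    intro Q hQ z hz hQP
    set V := Q.filter (fun q => ¬ (dist v z + dist z q ≤ (1 + ε) * dist v q)) with hV
    by_cases hVne : V.Nonempty
    · obtain ⟨q0, hq0V, hq0min⟩ := V.exists_min_image c hVne
      have hq0Q : q0 ∈ Q := (Finset.mem_filter.mp hq0V).1
      have hq0bad : ¬ (dist v z + dist z q0 ≤ (1 + ε) * dist v q0) :=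
        (Finset.mem_filter.mp hq0V).2
      have hq0P : q0 ∈ P := (hQP q0 hq0Q).1
      have hczq0 : c z ≤ c q0 := (hQP q0 hq0Q).2
      set Q' := (Q.erase q0).filter (fun q => c q0 ≤ c q) with hQ'
      have hQ'card : Q'.card ≤ n := by
        have h1 : Q'.card ≤ (Q.erase q0).card := Finset.card_filter_le _ _
        have h2 : (Q.erase q0).card = Q.card - 1 := Finset.card_erase_of_mem hq0Q
        have h3 : 1 ≤ Q.card := Finset.card_pos.mpr ⟨q0, hq0Q⟩
        omega
      obtain ⟨Z', hZ'sub, hZ'cov, hZ'card⟩ := ih Q' hQ'card q0 hq0P (by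
        intro q hq
        have hh := Finset.mem_filter.mp hq
        exact ⟨(hQP q (Finset.mem_of_mem_erase hh.1)).1, hh.2⟩)
      refine ⟨insert q0 Z', ?_, ?_, ?_⟩
      · intro x hx
        rcases Finset.mem_insert.mp hx with rfl | hx
        · exact hq0Q
        · exact Finset.mem_of_mem_erase (Finset.mem_filter.mp (hZ'sub hx)).1
      · intro w hw
        by_cases hwq : w = q0
        · subst hwq
          refine ⟨w, Finset.mem_insert_of_mem (Finset.mem_insert_self _ _), ?_⟩
          have hwd : 0 < dist v w := lt_of_lt_of_le hd (hdle w hq0P)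
          rw [dist_self]
          nlinarith
        · by_cases hcw : c q0 ≤ c w
          · have hwQ' : w ∈ Q' :=
              Finset.mem_filter.mpr ⟨Finset.mem_erase.mpr ⟨hwq, hw⟩, hcw⟩
            obtain ⟨z', hz', hcond⟩ := hZ'cov w hwQ'
            exact ⟨z', Finset.mem_insert_of_mem hz', hcond⟩
          · have hwV : w ∉ V := fun hwV => hcw (hq0min w hwV)
            have hcond : dist v z + dist z w ≤ (1 + ε) * dist v w := by
              by_contra h
              exact hwV (Finset.mem_filter.mpr ⟨hw, h⟩)
            exact ⟨z, Finset.mem_insert_self _ _, hcond⟩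
      · have hdist : dist z q0 = c q0 - c z := hc z hz q0 hq0P hczq0
        have hdq0 : d ≤ dist v q0 := hdle q0 hq0P
        have hstep : (dist v q0 - c q0) + ε * d ≤ dist v z - c z := by
          have h4 := not_le.mp hq0bad
          nlinarith [mul_le_mul_of_nonneg_left hdq0 h0.le]
        have hcard : ((insert q0 Z').card : ℝ) ≤ (Z'.card : ℝ) + 1 := by
          exact_mod_cast Finset.card_insert_le q0 Z'
        nlinarith [mul_le_mul_of_nonneg_left hcard (mul_pos h0 hd).le]
    · refine ⟨∅, by simp, ?_, by simpa using hlow z hz⟩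
      intro w hw
      refine ⟨z, Finset.mem_insert_self _ _, ?_⟩
      by_contra h
      exact hVne ⟨w, Finset.mem_filter.mpr ⟨hw, h⟩⟩

theorem portals_exist {X : Type*} [MetricSpace X] (ε : ℝ) (h0 : 0 < ε) (h1 : ε < 1)
    (v r : X) (P : Finset X)
    (hpath : ∀ z ∈ P, ∀ w ∈ P, dist r z ≤ dist r w → dist z w = dist r w - dist r z)
    (hv : ∀ z ∈ P, 0 < dist v z) :
    ∃ Z : Finset X, Z ⊆ P ∧ (Z.card : ℝ) < 4 * (ε - ε ^ 2)⁻¹ ∧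
      ∀ w ∈ P, ∃ z ∈ Z, dist v z + dist z w ≤ (1 + ε) * dist v w := by
  classical
  letI : DecidableEq X := Classical.decEq X
  have hεε : 0 < ε - ε ^ 2 := by nlinarith
  rcases P.eq_empty_or_nonempty with rfl | hP
  · refine ⟨∅, by simp, ?_, by simp⟩
    simp only [Finset.card_empty, Nat.cast_zero]
    positivity
  obtain ⟨z₀, hz₀P, hz₀min⟩ := P.exists_min_image (fun p => dist v p) hP
  set d := dist v z₀ with hdd
  have hd : 0 < d := hv z₀ hz₀P
  -- key triangle facts
  have htri : ∀ p ∈ P, dist p z₀ ≤ dist v p + d := by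
    intro p hp
    calc dist p z₀ ≤ dist p v + dist v z₀ := dist_triangle _ _ _
    _ = dist v p + d := by rw [dist_comm]
  have habs1 : ∀ p ∈ P, dist r p - dist r z₀ ≤ dist p z₀ := by
    intro p hp
    by_cases h : dist r z₀ ≤ dist r p
    · rw [dist_comm p z₀, hpath z₀ hz₀P p hp h]
    · have := dist_nonneg (x := p) (y := z₀)
      linarith [not_le.mp h]
  have habs2 : ∀ p ∈ P, dist r z₀ - dist r p ≤ dist p z₀ := by
    intro p hp
    by_cases h : dist r p ≤ dist r z₀
    · rw [hpath p hp z₀ hz₀P h]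
    · have := dist_nonneg (x := p) (y := z₀)
      linarith [not_le.mp h]
  -- right phase
  obtain ⟨ZR, hZRsub, hZRcov, hZRcard⟩ :=
    portals_phase ε h0 v P (fun p => dist r p) hpath d (-(dist r z₀) - d) hd hz₀min
      (by intro p hp; have := htri p hp; have := habs1 p hp; linarith)
      (P.filter (fun q => dist r z₀ ≤ dist r q)).card
      (P.filter (fun q => dist r z₀ ≤ dist r q)) le_rfl z₀ hz₀P
      (by intro q hq; exact ⟨(Finset.mem_filter.mp hq).1, (Finset.mem_filter.mp hq).2⟩)
  -- left phase
  obtain ⟨ZL, hZLsub, hZLcov, hZLcard⟩ :=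
    portals_phase ε h0 v P (fun p => -(dist r p))
      (by
        intro z hz w hw hcw
        have h' : dist r w ≤ dist r z := by linarith
        rw [dist_comm z w, hpath w hw z hz h']
        ring)
      d (dist r z₀ - d) hd hz₀min
      (by intro p hp; have := htri p hp; have := habs2 p hp; linarith)
      (P.filter (fun q => dist r q ≤ dist r z₀)).card
      (P.filter (fun q => dist r q ≤ dist r z₀)) le_rfl z₀ hz₀P
      (by
        intro q hq
        refine ⟨(Finset.mem_filter.mp hq).1, ?_⟩
        have := (Finset.mem_filter.mp hq).2
        linarith)
  refine ⟨insert z₀ (ZR ∪ ZL), ?_, ?_, ?_⟩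
  · intro x hx
    rcases Finset.mem_insert.mp hx with rfl | hx
    · exact hz₀P
    rcases Finset.mem_union.mp hx with hx | hx
    · exact (Finset.mem_filter.mp (hZRsub hx)).1
    · exact (Finset.mem_filter.mp (hZLsub hx)).1
  · -- cardinality
    have hZRcard' : ε * d * (ZR.card : ℝ) ≤ dist v z₀ - dist r z₀ - (-(dist r z₀) - d) :=
      hZRcard
    have hZLcard' : ε * d * (ZL.card : ℝ) ≤ dist v z₀ - (-(dist r z₀)) - (dist r z₀ - d) :=
      hZLcard
    have hRbound : ε * d * (ZR.card : ℝ) ≤ 2 * d := by rw [← hdd] at hZRcard'; linarith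
    have hLbound : ε * d * (ZL.card : ℝ) ≤ 2 * d := by rw [← hdd] at hZLcard'; linarith
    have hR2 : ε * (ZR.card : ℝ) ≤ 2 := by
      have := le_of_mul_le_mul_right (a := d) (by nlinarith : ε * (ZR.card : ℝ) * d ≤ 2 * d) hd
      linarith
    have hL2 : ε * (ZL.card : ℝ) ≤ 2 := by
      have := le_of_mul_le_mul_right (a := d) (by nlinarith : ε * (ZL.card : ℝ) * d ≤ 2 * d) hd
      linarith
    have hcardn : (insert z₀ (ZR ∪ ZL)).card ≤ ZR.card + ZL.card + 1 := by
      calc (insert z₀ (ZR ∪ ZL)).card ≤ (ZR ∪ ZL).card + 1 := Finset.card_insert_le _ _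
      _ ≤ ZR.card + ZL.card + 1 := by
        have := Finset.card_union_le ZR ZL
        omega
    have hcardr : ((insert z₀ (ZR ∪ ZL)).card : ℝ) ≤ (ZR.card : ℝ) + (ZL.card : ℝ) + 1 := by
      exact_mod_cast hcardn
    rw [show (4 : ℝ) * (ε - ε ^ 2)⁻¹ = 4 / (ε - ε ^ 2) by ring, lt_div_iff₀ hεε]
    have h5 : (0:ℝ) ≤ (ZR.card : ℝ) := Nat.cast_nonneg _
    have h6 : (0:ℝ) ≤ (ZL.card : ℝ) := Nat.cast_nonneg _
    nlinarith [mul_le_mul_of_nonneg_right hR2 (by linarith : (0:ℝ) ≤ 1 - ε),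
      mul_le_mul_of_nonneg_right hL2 (by linarith : (0:ℝ) ≤ 1 - ε),
      mul_le_mul_of_nonneg_right hcardr (by nlinarith : (0:ℝ) ≤ ε - ε ^ 2)]
  · intro w hw
    rcases le_total (dist r z₀) (dist r w) with h | h
    · obtain ⟨z', hz', hcond⟩ := hZRcov w (Finset.mem_filter.mpr ⟨hw, h⟩)
      refine ⟨z', ?_, hcond⟩
      rcases Finset.mem_insert.mp hz' with rfl | hz'
      · exact Finset.mem_insert_self _ _
      · exact Finset.mem_insert_of_mem (Finset.mem_union_left _ hz')
    · obtain ⟨z', hz', hcond⟩ := hZLcov w (Finset.mem_filter.mpr ⟨hw, h⟩)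
      refine ⟨z', ?_, hcond⟩
      rcases Finset.mem_insert.mp hz' with rfl | hz'
      · exact Finset.mem_insert_self _ _
      · exact Finset.mem_insert_of_mem (Finset.mem_union_right _ hz')
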